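/- arXiv:1708.03515 — 3 statements merged into one kernel-verified Lean document; each statement's English description precedes it below -/
import Mathlib

section
/- Let r ≥ 1 and d ≥ 2r be real numbers with d ≥ 1, and let λ = (log₂(4d/r))/d. If λ ≤ 1, then 2^(-λ) + 2^(-λ·d)/r ≤ 1. -/
lemma two_rpow_neg_le_aux (x : ℝ) (h0 : 0 ≤ x) (h1 : x ≤ 1) :
    (2 : ℝ) ^ (-x) ≤ 1 - x / 2 := by
  have h := convexOn_exp.2 (Set.mem_univ (0 : ℝ))
    (Set.mem_univ (-Real.log 2)) (by linarith : (0:ℝ) ≤ 1 - x) h0 (by ring)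
  simp only [smul_eq_mul, mul_zero, zero_add, Real.exp_zero, mul_one] at h
  rw [Real.exp_neg, Real.exp_log two_pos] at h
  rw [Real.rpow_def_of_pos two_pos]
  calc Real.exp (Real.log 2 * -x) = Real.exp (x * -Real.log 2) := by ring_nf
    _ ≤ 1 - x + x * 2⁻¹ := h
    _ = 1 - x / 2 := by ring

theorem recurrence_key_step (r d : ℝ) (hr : 1 ≤ r) (hd1 : 1 ≤ d) (hd : 2 * r ≤ d)
    (lam : ℝ) (hlam : lam = Real.logb 2 (4 * d / r) / d) (hlam1 : lam ≤ 1) :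
    (2 : ℝ) ^ (-lam) + (2 : ℝ) ^ (-(lam * d)) / r ≤ 1 := by
  have hr0 : (0:ℝ) < r := by linarith
  have hd0 : (0:ℝ) < d := by linarith
  have hy : (2:ℝ) ≤ 4 * d / r := by
    rw [le_div_iff₀ hr0]; linarith
  have hy0 : (0:ℝ) < 4 * d / r := by linarith
  have hlog1 : (1:ℝ) ≤ Real.logb 2 (4 * d / r) := by
    rw [Real.le_logb_iff_rpow_le one_lt_two hy0, Real.rpow_one]; exact hy
  have hlam0 : 0 ≤ lam := by
    rw [hlam]; positivity
  have hld : lam * d = Real.logb 2 (4 * d / r) := by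
    rw [hlam]; field_simp
  have h2 : (2:ℝ) ^ (-(lam * d)) = r / (4 * d) := by
    rw [hld, Real.rpow_neg (by norm_num), Real.rpow_logb two_pos (by norm_num) hy0]
    field_simp
  have h1 : (2:ℝ) ^ (-lam) ≤ 1 - lam / 2 := two_rpow_neg_le_aux lam hlam0 hlam1
  have hlamd : 1 / d ≤ lam := by
    rw [hlam, div_le_div_iff₀ hd0 hd0]
    nlinarith
  have : (2:ℝ) ^ (-(lam * d)) / r = 1 / (4 * d) := by
    rw [h2]; field_simp
  rw [this]
  have : 1 / (4 * d) ≤ lam / 2 := by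
    rw [div_le_div_iff₀ (by linarith) (by norm_num)]
    nlinarith [mul_le_mul_of_nonneg_left hlamd (le_of_lt hd0)]
  linarith
end

section
/- Let d ≥ 2 be a natural number, r ≥ 1 a real, λ = (log₂(4d/r))/d with λ ≤ 1, and suppose d ≥ 2r. Let R : ℕ → ℝ≥0 satisfy R(n) ≤ 1 for all n < d, and R(n) ≤ R(n-1) + R(n-d)/r for all n ≥ d. Then R(n) ≤ 2^(λ·n) for all n. -/
theorem branching_recurrence_bound (d : ℕ) (hd : 2 ≤ d) (r : ℝ) (hr : 1 ≤ r)
    (lam : ℝ) (hlam : lam = Real.logb 2 (4 * d / r) / d) (hlam1 : lam ≤ 1)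
    (hdr : 2 * r ≤ (d : ℝ))
    (R : ℕ → NNReal)
    (hbase : ∀ n, n < d → R n ≤ 1)
    (hrec : ∀ n, d ≤ n → (R n : ℝ) ≤ (R (n - 1) : ℝ) + (R (n - d) : ℝ) / r) :
    ∀ n, (R n : ℝ) ≤ (2 : ℝ) ^ (lam * n) := by
  have hr0 : (0:ℝ) < r := lt_of_lt_of_le one_pos hr
  have hd0 : (0:ℝ) < d := by exact_mod_cast Nat.lt_of_lt_of_le (by norm_num) hd
  have hx : (0:ℝ) < 4 * d / r := by positivity
  have h8 : (8:ℝ) ≤ 4 * d / r := by rw [le_div_iff₀ hr0]; linarith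
  have h3 : (3:ℝ) ≤ Real.logb 2 (4 * d / r) := by
    rw [Real.le_logb_iff_rpow_le one_lt_two hx]
    rw [show (2:ℝ) ^ (3:ℝ) = 8 by
      rw [show (3:ℝ) = ((3:ℕ):ℝ) by norm_num, Real.rpow_natCast]; norm_num]
    exact h8
  have hld : (3:ℝ) ≤ lam * d := by
    rw [hlam, div_mul_cancel₀ _ hd0.ne']; exact h3
  have hlam0 : 0 < lam := by
    rw [hlam]; exact div_pos (by linarith) hd0
  have hpow_d : (2:ℝ) ^ (lam * d) = 4 * d / r := by
    rw [hlam, div_mul_cancel₀ _ hd0.ne']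
    exact Real.rpow_logb (by norm_num) (by norm_num) hx
  have hL : (0.6931471803:ℝ) < Real.log 2 := Real.log_two_gt_d9
  set L := Real.log 2 with hLdef
  have hexp : 1 + lam * L ≤ (2:ℝ) ^ lam := by
    rw [Real.rpow_def_of_pos (by norm_num : (0:ℝ) < 2)]
    have := Real.add_one_le_exp (lam * L)
    rw [mul_comm] at this ⊢
    linarith
  have h4d : (0:ℝ) < 4 * d := by positivity
  have key : (1:ℝ) ≤ (4 * d - 1) * (lam * L) := by
    nlinarith [mul_nonneg (sub_nonneg.2 hld) (by linarith : (0:ℝ) ≤ L), mul_nonneg (sub_nonneg.2 hlam1) (by linarith : (0:ℝ) ≤ L)]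
  have h1L : (0:ℝ) < 1 + lam * L := by nlinarith
  have hstep : (1:ℝ) ≤ (1 - 1/(4*d)) * (1 + lam * L) := by
    have he : (1:ℝ) - 1/(4*d) = (4*d-1)/(4*d) := by field_simp
    rw [he, div_mul_eq_mul_div, le_div_iff₀ h4d]
    nlinarith [key]
  have hneg : (2:ℝ) ^ (-lam) ≤ 1 - 1/(4*d) := by
    have h1 : (2:ℝ) ^ (-lam) = ((2:ℝ) ^ lam)⁻¹ := Real.rpow_neg (by norm_num) lam
    have h2 : ((2:ℝ) ^ lam)⁻¹ ≤ (1 + lam * L)⁻¹ := by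
      apply inv_anti₀ h1L hexp
    have h3' : (1 + lam * L)⁻¹ ≤ 1 - 1/(4*d) := by
      rw [inv_eq_one_div, div_le_iff₀ h1L]
      nlinarith [hstep]
    linarith [h1 ▸ le_trans h2 h3']
  have h2d : (2:ℝ) ^ (-(lam * d)) / r = 1 / (4*d) := by
    rw [Real.rpow_neg (by norm_num), hpow_d]
    field_simp
  have hkey : (2:ℝ) ^ (-lam) + (2:ℝ) ^ (-(lam * d)) / r ≤ 1 := by
    rw [h2d]; linarith
  intro n
  induction n using Nat.strong_induction_on with
  | _ n ih =>
    rcases lt_or_ge n d with h | h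
    · calc (R n : ℝ) ≤ 1 := by exact_mod_cast hbase n h
        _ ≤ 2 ^ (lam * n) := Real.one_le_rpow one_le_two (by positivity)
    · have hn2 : 2 ≤ n := le_trans hd h
      have hn1 : n - 1 < n := Nat.sub_lt (by omega) one_pos
      have hnd : n - d < n := Nat.sub_lt (by omega) (by omega)
      have c1 : ((n-1:ℕ):ℝ) = (n:ℝ) - 1 := by
        rw [Nat.cast_sub (by omega)]; norm_num
      have c2 : ((n-d:ℕ):ℝ) = (n:ℝ) - d := by
        rw [Nat.cast_sub h]
      have hpn : (0:ℝ) < 2 ^ (lam * n) := Real.rpow_pos_of_pos (by norm_num) _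
      calc (R n : ℝ) ≤ (R (n-1) : ℝ) + (R (n-d) : ℝ) / r := hrec n h
        _ ≤ 2 ^ (lam * ((n-1:ℕ):ℝ)) + 2 ^ (lam * ((n-d:ℕ):ℝ)) / r := by
            gcongr
            · exact ih _ hn1
            · exact ih _ hnd
        _ = 2 ^ (lam * n) * ((2:ℝ) ^ (-lam) + (2:ℝ) ^ (-(lam * d)) / r) := by
            rw [c1, c2, mul_sub, mul_sub, mul_one]
            rw [show lam * n - lam = lam * n + (-lam) by ring,
                show lam * n - lam * d = lam * n + (-(lam * d)) by ring,
                Real.rpow_add (by norm_num), Real.rpow_add (by norm_num)]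
            ring
        _ ≤ 2 ^ (lam * n) * 1 := by
            apply mul_le_mul_of_nonneg_left hkey hpn.le
        _ = 2 ^ (lam * n) := mul_one _
end

section
/- Let Φ be a finite set of predicates P₁,…,P_m over a finite variable set X with assignments into {0,1}, and let G be the FGLSS graph: vertices are pairs (i,γ) where γ is a partial assignment to the variables of P_i satisfying P_i, and two vertices (i,γ), (i',γ') are adjacent iff γ and γ' assign different values to some common variable. Then the maximum independent set size α(G) equals the maximum over assignments σ : X → {0,1} of the number of predicates satisfied by σ. -/
theorem fglss_reduction (X : Type*) [Fintype X] [DecidableEq X] (m : ℕ)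
    (vars : Fin m → Finset X) (P : Fin m → (X → Bool) → Prop)
    [∀ i σ, Decidable (P i σ)]
    (hdep : ∀ i (σ σ' : X → Bool), (∀ x ∈ vars i, σ x = σ' x) → (P i σ ↔ P i σ'))
    (G : SimpleGraph (Σ i : Fin m,
      {γ : ∀ x ∈ vars i, Bool //
        ∀ σ : X → Bool, (∀ x (h : x ∈ vars i), σ x = γ x h) → P i σ}))
    (hG : ∀ a b, G.Adj a b ↔ a ≠ b ∧
      ∃ x, ∃ (h1 : x ∈ vars a.1) (h2 : x ∈ vars b.1), a.2.1 x h1 ≠ b.2.1 x h2) :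
    ∃ N : ℕ,
      IsGreatest {n | ∃ s : Finset (Σ i : Fin m,
          {γ : ∀ x ∈ vars i, Bool //
            ∀ σ : X → Bool, (∀ x (h : x ∈ vars i), σ x = γ x h) → P i σ}),
          (∀ a ∈ s, ∀ b ∈ s, ¬ G.Adj a b) ∧ n = s.card} N ∧
      IsGreatest {n | ∃ σ : X → Bool,
          n = (Finset.univ.filter (fun i => P i σ)).card} N := by
  classical
  set V := (Σ i : Fin m,
      {γ : ∀ x ∈ vars i, Bool //
        ∀ σ : X → Bool, (∀ x (h : x ∈ vars i), σ x = γ x h) → P i σ}) with hV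
  let cnt : (X → Bool) → ℕ := fun σ => (Finset.univ.filter (fun i => P i σ)).card
  let T : Finset ℕ := Finset.univ.image cnt
  have hTne : T.Nonempty := ⟨cnt (fun _ => false),
    Finset.mem_image_of_mem _ (Finset.mem_univ _)⟩
  set N := T.max' hTne with hN
  -- any σ has cnt σ ≤ N
  have hle : ∀ σ : X → Bool, cnt σ ≤ N := fun σ =>
    Finset.le_max' _ _ (Finset.mem_image_of_mem _ (Finset.mem_univ _))
  obtain ⟨σ₀, -, hσ₀⟩ := Finset.mem_image.mp (T.max'_mem hTne)
  refine ⟨N, ⟨?_, ?_⟩, ⟨⟨σ₀, hσ₀.symm⟩, ?_⟩⟩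
  · -- N is achieved by an independent set: vertices from σ₀
    let f : {i : Fin m // P i σ₀} → V := fun ⟨i, hi⟩ =>
      ⟨i, ⟨fun x _ => σ₀ x, fun σ' hσ' =>
        (hdep i σ' σ₀ (fun x hx => hσ' x hx)).mpr hi⟩⟩
    have hfinj : Function.Injective f := by
      rintro ⟨i, hi⟩ ⟨j, hj⟩ h
      have : i = j := congrArg Sigma.fst h
      exact Subtype.ext this
    refine ⟨Finset.univ.image f, ?_, ?_⟩
    · intro a ha b hb hadj
      obtain ⟨ia, -, rfl⟩ := Finset.mem_image.mp ha
      obtain ⟨ib, -, rfl⟩ := Finset.mem_image.mp hb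
      obtain ⟨-, x, h1, h2, hne⟩ := (hG _ _).mp hadj
      exact hne rfl
    · rw [Finset.card_image_of_injective _ hfinj]
      rw [hN, ← hσ₀]
      simp [cnt, Fintype.card_subtype]
  · -- upper bound for independent sets
    rintro n ⟨s, hind, rfl⟩
    -- consistency
    have hcons : ∀ a ∈ s, ∀ b ∈ s, ∀ x (h1 : x ∈ vars a.1) (h2 : x ∈ vars b.1),
        a.2.1 x h1 = b.2.1 x h2 := by
      intro a ha b hb x h1 h2
      by_contra hne
      rcases eq_or_ne a b with rfl | hab
      · exact hne rfl
      · exact hind a ha b hb ((hG a b).mpr ⟨hab, x, h1, h2, hne⟩)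
    let σ : X → Bool := fun x =>
      if h : ∃ a : V, a ∈ s ∧ ∃ hx : x ∈ vars a.1, a.2.1 x hx = true then true
      else false
    have hagree : ∀ a ∈ s, ∀ x (hx : x ∈ vars a.1), σ x = a.2.1 x hx := by
      intro a ha x hx
      by_cases h : ∃ b : V, b ∈ s ∧ ∃ hx' : x ∈ vars b.1, b.2.1 x hx' = true
      · obtain ⟨b, hb, hx', hbtrue⟩ := h
        have : σ x = true := dif_pos ⟨b, hb, hx', hbtrue⟩
        rw [this, ← hbtrue]
        exact (hcons a ha b hb x hx hx').symm
      · have : σ x = false := dif_neg h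
        rw [this]
        by_contra hne
        have : a.2.1 x hx = true := by
          cases hb : a.2.1 x hx
          · exact absurd hb.symm hne
          · rfl
        exact h ⟨a, ha, hx, this⟩
    have hP : ∀ a ∈ s, P a.1 σ := fun a ha => a.2.2 σ (hagree a ha)
    have hinj : Set.InjOn (Sigma.fst : V → Fin m) (↑s : Set V) := by
      intro a ha b hb hab
      rcases a with ⟨i, γ⟩
      rcases b with ⟨j, δ⟩
      cases hab
      have : γ = δ := by
        apply Subtype.ext
        funext x hx
        exact hcons _ ha _ hb x hx hx
      rw [this]
    calc s.card = (s.image (Sigma.fst : V → Fin m)).card := (Finset.card_image_of_injOn hinj).symm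
      _ ≤ cnt σ := by
          apply Finset.card_le_card
          intro i hi
          obtain ⟨a, ha, rfl⟩ := Finset.mem_image.mp hi
          exact Finset.mem_filter.mpr ⟨Finset.mem_univ _, hP a ha⟩
      _ ≤ N := hle σ
  · rintro n ⟨σ, rfl⟩
    exact hle σ
end
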